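/- Let N ≥ 1 be an integer, q ∈ ℝ with q ≠ 1, and θ ∈ ℝ such that 1 − (q−1)θk > 0 for every k ∈ {0,…,N}. Then ∑_{k=0}^{N} k · C(N,k) · (1 − (q−1)θk)^{1/(q−1)} = N · (1 − (q−1)θ)^{1/(q−1)} · ∑_{k=0}^{N−1} C(N−1,k) · (1 − (q−1)θ′k)^{1/(q−1)}, where θ′ = θ/(1 − (q−1)θ). Equivalently, in the q-exponential Erdős–Rényi ensemble the expected number of links satisfies ⟨L⟩ = N · exp_{2−q}(−θ) · Z_{q,N−1}(θ′) / Z_{q,N}(θ). -/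

import Mathlib

open Finset

/-- The average number of links identity for the `q`-exponential Erdős–Rényi model:
for `N ≥ 1`, `q ≠ 1` and `θ` such that `1 - (q-1)θk > 0` for all `0 ≤ k ≤ N`,
`∑_{k=0}^{N} k C(N,k) (1-(q-1)θk)^(1/(q-1))
  = N (1-(q-1)θ)^(1/(q-1)) ∑_{k=0}^{N-1} C(N-1,k) (1-(q-1)θ'k)^(1/(q-1))`
with `θ' = θ/(1-(q-1)θ)`, i.e. `⟨L⟩ = N exp_{2-q}(-θ) Z_{q,N-1}(θ') / Z_{q,N}(θ)`. -/
theorem qER_average_links (N : ℕ) (hN : 1 ≤ N) (q θ : ℝ) (hq : q ≠ 1)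
    (hpos : ∀ k : ℕ, k ≤ N → 0 < 1 - (q - 1) * θ * (k : ℝ)) :
    ∑ k ∈ range (N + 1),
        (k : ℝ) * (N.choose k : ℝ) * (1 - (q - 1) * θ * (k : ℝ)) ^ ((1 : ℝ) / (q - 1))
      = (N : ℝ) * (1 - (q - 1) * θ) ^ ((1 : ℝ) / (q - 1)) *
        ∑ k ∈ range N,
          ((N - 1).choose k : ℝ) *
            (1 - (q - 1) * (θ / (1 - (q - 1) * θ)) * (k : ℝ)) ^ ((1 : ℝ) / (q - 1)) := by
  have hA : 0 < 1 - (q - 1) * θ := by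
    have := hpos 1 hN
    simpa using this
  rw [Finset.sum_range_succ']
  simp only [Nat.cast_zero, zero_mul, add_zero]
  rw [Finset.mul_sum]
  refine Finset.sum_congr rfl fun j hj => ?_
  have hjN : j + 1 ≤ N := Finset.mem_range.mp hj
  have hB : 0 < 1 - (q - 1) * (θ / (1 - (q - 1) * θ)) * (j : ℝ) := by
    have hprod : (1 - (q - 1) * θ) * (1 - (q - 1) * (θ / (1 - (q - 1) * θ)) * (j : ℝ))
        = 1 - (q - 1) * θ * ((j : ℝ) + 1) := by
      field_simp
      ring
    have h2 := hpos (j + 1) hjN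
    push_cast at h2
    nlinarith [hprod]
  have hfac : (1 - (q - 1) * θ * (((j : ℝ)) + 1)) ^ ((1 : ℝ) / (q - 1))
      = (1 - (q - 1) * θ) ^ ((1 : ℝ) / (q - 1)) *
        (1 - (q - 1) * (θ / (1 - (q - 1) * θ)) * (j : ℝ)) ^ ((1 : ℝ) / (q - 1)) := by
    rw [← Real.mul_rpow hA.le hB.le]
    congr 1
    field_simp
    ring
  have hchoose : ((j : ℝ) + 1) * (N.choose (j + 1) : ℝ) = (N : ℝ) * ((N - 1).choose j : ℝ) := by
    obtain ⟨n, rfl⟩ := Nat.exists_eq_succ_of_ne_zero (show N ≠ 0 by omega)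
    have h : (j + 1) * ((n + 1).choose (j + 1)) = (n + 1) * (n.choose j) := by
      rw [mul_comm]; exact (Nat.add_one_mul_choose_eq n j).symm
    exact_mod_cast congrArg (Nat.cast : ℕ → ℝ) h
  push_cast
  rw [hfac]
  linear_combination ((1 - (q - 1) * θ) ^ ((1:ℝ) / (q - 1)) *
    (1 - (q - 1) * (θ / (1 - (q - 1) * θ)) * (j : ℝ)) ^ ((1:ℝ) / (q - 1))) * hchoose
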